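/- For every integer N ≥ 2: Σ_{j=1}^{N} (−1)^j j(j−1) C(2N−1, N−j) U_{2j−2}(z) = (N−1) 2^{2N−3} (2Nz² − 1)(1 − z²)^{N−2}. -/

import Mathlib

open Polynomial Finset
set_option maxHeartbeats 1600000

theorem sum_split {M : Type*} [AddCommMonoid M] (N : ℕ) (f : ℕ → M) :
    ∑ j ∈ Icc 1 N, (f (N+j-1) + f (N-j)) = ∑ k ∈ range (2*N), f k := by
  rw [show Icc 1 N = Ico 1 (N+1) by rw [Finset.Ico_add_one_right_eq_Icc], Finset.sum_Ico_eq_sum_range]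
  simp only [Nat.add_sub_cancel]
  rw [Finset.sum_add_distrib]
  have h1 : ∑ i ∈ range N, f (N+(1+i)-1) = ∑ i ∈ range N, f (N+i) := by
    apply Finset.sum_congr rfl; intro i _; congr 1; omega
  have h2 : ∑ i ∈ range N, f (N-(1+i)) = ∑ i ∈ range N, f i := by
    rw [← Finset.sum_range_reflect]
    apply Finset.sum_congr rfl; intro i hi; congr 1
    simp at hi; omega
  rw [h1, h2, two_mul, Finset.sum_range_add, add_comm]

theorem phiC (N k : ℕ) (a : ℚ) :
    (X:ℚ[X])^2 * derivative (derivative (C a * X^k))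
      + C (2-2*(N:ℚ)) * X * derivative (C a * X^k)
      + C ((N:ℚ)*((N:ℚ)-1)) * (C a * X^k)
    = C (a * (((k:ℚ)-N) * ((k:ℚ)-N+1))) * X^k := by
  match k with
  | 0 =>
    simp only [pow_zero, mul_one, derivative_C, derivative_zero, mul_zero, zero_add,
      Nat.cast_zero, map_mul, map_sub, map_add, map_ofNat, map_one, map_natCast, map_zero]
    ring
  | 1 =>
    simp only [pow_one, derivative_C_mul, derivative_X, derivative_C, mul_one, derivative_one,
      mul_zero, zero_add, Nat.cast_one, map_mul, map_sub, map_add, map_ofNat, map_one,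
      map_natCast, map_zero]
    ring
  | (k+2) =>
    have d1 : derivative ((X:ℚ[X])^(k+2)) = C ((k:ℚ)+2) * X^(k+1) := by
      rw [derivative_X_pow]; push_cast; rfl
    have d2 : derivative (C ((k:ℚ)+2) * (X:ℚ[X])^(k+1)) = C (((k:ℚ)+2)*((k:ℚ)+1)) * X^k := by
      rw [derivative_C_mul, derivative_X_pow]; push_cast
      rw [← mul_assoc, ← C_mul]
    rw [derivative_C_mul, d1, derivative_C_mul, d2]
    simp only [Nat.cast_add, Nat.cast_ofNat, map_mul, map_sub, map_add, map_ofNat, map_one,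
      map_natCast]
    ring

theorem stepA (N : ℕ) (hN : 2 ≤ N) :
    ∑ j ∈ Icc 1 N, C ((-1:ℚ)^j * j * ((j:ℚ)-1) * ((2*N-1).choose (N-j) : ℚ)) *
        ((X:ℚ[X])^(N+j-1) - X^(N-j)) =
      C ((-1:ℚ)^N * ((N:ℚ)-1)) * (C ((N:ℚ)) * (X+1)^2 - 2*X) * (X-1)^(2*N-3) := by
  obtain ⟨p, rfl⟩ : ∃ p, N = p + 2 := ⟨N - 2, by omega⟩
  rw [show 2*(p+2)-1 = 2*p+3 from by omega, show 2*(p+2)-3 = 2*p+1 from by omega]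
  -- the binomial expansion of (X-1)^(2p+3)
  have hexp : ((X:ℚ[X]) - 1)^(2*p+3) =
      ∑ k ∈ range (2*(p+2)), C ((-1:ℚ)^(2*p+3-k) * ((2*p+3).choose k : ℚ)) * X^k := by
    rw [sub_eq_add_neg, add_pow, show 2*p+3+1 = 2*(p+2) from by omega]
    refine Finset.sum_congr rfl fun k hk => ?_
    simp only [map_mul, map_pow, map_neg, map_one, C_eq_natCast]
    ring
  -- applying the operator termwise
  have hPhi : (X:ℚ[X])^2 * derivative (derivative (((X:ℚ[X]) - 1)^(2*p+3)))
      + C (2-2*((p+2:ℕ):ℚ)) * X * derivative (((X:ℚ[X]) - 1)^(2*p+3))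
      + C (((p+2:ℕ):ℚ)*(((p+2:ℕ):ℚ)-1)) * (((X:ℚ[X]) - 1)^(2*p+3)) =
      ∑ k ∈ range (2*(p+2)),
        C (((-1:ℚ)^(2*p+3-k) * ((2*p+3).choose k : ℚ)) *
          (((k:ℚ)-((p+2:ℕ):ℚ)) * ((k:ℚ)-((p+2:ℕ):ℚ)+1))) * X^k := by
    rw [hexp, derivative_sum, derivative_sum, Finset.mul_sum, Finset.mul_sum, Finset.mul_sum,
      ← Finset.sum_add_distrib, ← Finset.sum_add_distrib]
    exact Finset.sum_congr rfl fun k _ => phiC (p+2) k _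
  -- closed form of the operator applied to (X-1)^(2p+3)
  have hclosed : (X:ℚ[X])^2 * derivative (derivative (((X:ℚ[X]) - 1)^(2*p+3)))
      + C (2-2*((p+2:ℕ):ℚ)) * X * derivative (((X:ℚ[X]) - 1)^(2*p+3))
      + C (((p+2:ℕ):ℚ)*(((p+2:ℕ):ℚ)-1)) * (((X:ℚ[X]) - 1)^(2*p+3)) =
      C (((p+2:ℕ):ℚ)-1) * (C (((p+2:ℕ):ℚ)) * (X+1)^2 - 2*X) * (X-1)^(2*p+1) := by
    have dX : derivative ((X:ℚ[X]) - 1) = 1 := by simp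
    have d1 : derivative (((X:ℚ[X]) - 1)^(2*p+3)) = C ((2*p+3:ℕ):ℚ) * (X-1)^(2*p+2) := by
      rw [derivative_pow, dX, mul_one, show 2*p+3-1 = 2*p+2 from by omega]
    have d2 : derivative (C ((2*p+3:ℕ):ℚ) * ((X:ℚ[X])-1)^(2*p+2)) =
        C ((2*p+3:ℕ):ℚ) * (C ((2*p+2:ℕ):ℚ) * (X-1)^(2*p+1)) := by
      rw [derivative_C_mul, derivative_pow, dX, mul_one, show 2*p+2-1 = 2*p+1 from by omega]
    rw [d1, d2]
    push_cast
    simp only [map_mul, map_sub, map_add, map_ofNat, map_one, map_natCast]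
    ring
  have hmain := hPhi.symm.trans hclosed
  set f : ℕ → ℚ[X] := fun k =>
    C ((-1:ℚ)^(p+2)) * (C (((-1:ℚ)^(2*p+3-k) * ((2*p+3).choose k : ℚ)) *
      (((k:ℚ)-((p+2:ℕ):ℚ)) * ((k:ℚ)-((p+2:ℕ):ℚ)+1))) * X^k) with hf
  calc ∑ j ∈ Icc 1 (p+2), C ((-1:ℚ)^j * j * ((j:ℚ)-1) * ((2*p+3).choose (p+2-j) : ℚ)) *
        ((X:ℚ[X])^(p+2+j-1) - X^(p+2-j))
      = ∑ j ∈ Icc 1 (p+2), (f (p+2+j-1) + f (p+2-j)) := by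
        refine Finset.sum_congr rfl fun j hj => ?_
        simp only [Finset.mem_Icc] at hj
        obtain ⟨hj1, hj2⟩ := hj
        have e0 : p+2+j-1 = p+1+j := by omega
        have e1 : 2*p+3-(p+1+j) = p+2-j := by omega
        have e2 : 2*p+3-(p+2-j) = p+1+j := by omega
        have c1 : (2*p+3).choose (p+1+j) = (2*p+3).choose (p+2-j) := by
          rw [← Nat.choose_symm (show p+2-j ≤ 2*p+3 by omega)]; congr 1; omega
        have sq : ∀ m : ℕ, (-1:ℚ)^m * (-1)^m = 1 := fun m => by
          rw [← pow_add, ← two_mul, pow_mul]; norm_num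
        have sign1 : (-1:ℚ)^(p+2) * (-1)^(p+2-j) = (-1)^j := by
          obtain ⟨m, hm⟩ : ∃ m, p+2 = j+m := ⟨p+2-j, by omega⟩
          rw [hm, show j+m-j = m from by omega, pow_add, mul_assoc, sq, mul_one]
        have sign2 : (-1:ℚ)^(p+2) * (-1)^(p+1+j) = -(-1)^j := by
          rw [show p+2 = (p+1)+1 from rfl, show p+1+j = (p+1)+j from rfl, pow_add, pow_add,
            pow_one]
          linear_combination (-((-1:ℚ)^j)) * sq (p+1)
        simp only [hf]
        rw [e0, e1, e2, c1]
        push_cast [Nat.cast_sub hj2]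
        rw [mul_sub, sub_eq_add_neg, ← neg_mul, ← C_neg]
        simp only [← mul_assoc, ← C_mul]
        congr 1
        · congr 1
          rw [C_inj, ← sign1]; ring
        · congr 1
          rw [C_inj]
          linear_combination (-((((2*p+3).choose (p+2-j)):ℚ) * (j:ℚ) * ((j:ℚ)-1))) * sign2
    _ = ∑ k ∈ range (2*(p+2)), f k := sum_split (p+2) f
    _ = C ((-1:ℚ)^(p+2)) * ∑ k ∈ range (2*(p+2)),
          C (((-1:ℚ)^(2*p+3-k) * ((2*p+3).choose k : ℚ)) *
            (((k:ℚ)-((p+2:ℕ):ℚ)) * ((k:ℚ)-((p+2:ℕ):ℚ)+1))) * X^k := by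
        rw [hf, Finset.mul_sum]
    _ = C ((-1:ℚ)^(p+2)) * (C (((p+2:ℕ):ℚ)-1) * (C (((p+2:ℕ):ℚ)) * (X+1)^2 - 2*X) * (X-1)^(2*p+1)) := by
        rw [hmain]
    _ = C ((-1:ℚ)^(p+2) * (((p+2:ℕ):ℚ)-1)) * (C (((p+2:ℕ):ℚ)) * (X+1)^2 - 2*X) * (X-1)^(2*p+1) := by
        rw [C_mul]; ring

set_option maxHeartbeats 1600000 in
theorem stmt16 (N : ℕ) (hN : 2 ≤ N) :
    ∑ j ∈ Finset.Icc 1 N,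
        Polynomial.C ((-1 : ℚ) ^ j * (j : ℚ) * ((j : ℚ) - 1) *
            ((2 * N - 1).choose (N - j) : ℚ)) *
          Polynomial.Chebyshev.U ℚ (2 * (j : ℤ) - 2) =
      Polynomial.C (((N : ℚ) - 1) * 2 ^ (2 * N - 3)) *
        (Polynomial.C (2 * (N : ℚ)) * Polynomial.X ^ 2 - 1) *
        (1 - Polynomial.X ^ 2) ^ (N - 2) := by
  -- the key scalar consequence of `stepA` over ℂ
  have key : ∀ v : ℂ,
      ∑ j ∈ Icc 1 N, ((-1:ℂ)^j * j * ((j:ℂ)-1) * ((2*N-1).choose (N-j) : ℂ)) *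
          (v^(N+j-1) - v^(N-j)) =
        ((-1:ℂ)^N * ((N:ℂ)-1)) * ((N:ℂ) * (v+1)^2 - 2*v) * (v-1)^(2*N-3) := by
    intro v
    have h := congrArg (fun q : ℚ[X] => eval v (q.map (algebraMap ℚ ℂ))) (stepA N hN)
    simp only [Polynomial.map_sum, Polynomial.map_mul, Polynomial.map_sub, Polynomial.map_pow,
      Polynomial.map_add, Polynomial.map_neg, Polynomial.map_natCast, Polynomial.map_C,
      Polynomial.map_X, Polynomial.map_one, Polynomial.map_ofNat,
      eval_finset_sum, eval_mul, eval_sub, eval_pow, eval_C, eval_X, eval_one, eval_ofNat,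
      eval_add, eval_neg, eval_natCast,
      map_mul, map_sub, map_pow, map_neg, map_one, map_natCast, map_ofNat] at h
    convert h using 2 <;> push_cast <;> ring_nf
  obtain ⟨p, hp⟩ : ∃ p, N = p + 2 := ⟨N - 2, by omega⟩
  apply Polynomial.map_injective (algebraMap ℚ ℂ) ((algebraMap ℚ ℂ).injective)
  apply Polynomial.eq_of_infinite_eval_eq
  have hinj : Set.InjOn (fun r : ℝ => ((Real.cos r : ℝ) : ℂ)) (Set.Ioo 0 Real.pi) := by
    intro x hx y hy hxy
    exact Real.injOn_cos ⟨hx.1.le, hx.2.le⟩ ⟨hy.1.le, hy.2.le⟩ (Complex.ofReal_inj.mp hxy)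
  have hinf : ((fun r : ℝ => ((Real.cos r : ℝ) : ℂ)) '' Set.Ioo 0 Real.pi).Infinite :=
    Set.Infinite.image hinj (Set.Ioo_infinite Real.pi_pos)
  refine hinf.mono ?_
  rintro z ⟨r, hr, rfl⟩
  simp only [Set.mem_setOf_eq]
  set θ : ℂ := (r : ℂ) with hθ
  rw [show ((Real.cos r : ℝ) : ℂ) = Complex.cos θ from Complex.ofReal_cos r]
  have hs : Complex.sin θ ≠ 0 := by
    rw [hθ, ← Complex.ofReal_sin]
    exact_mod_cast (Real.sin_pos_of_pos_of_lt_pi hr.1 hr.2).ne'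
  set u : ℂ := Complex.exp (θ * Complex.I) with hu
  have hu0 : u ≠ 0 := Complex.exp_ne_zero _
  have hcos : Complex.cos θ = (u + u⁻¹)/2 := by
    rw [Complex.cos, ← Complex.exp_neg, neg_mul]
  have hsin : Complex.sin θ = (u⁻¹ - u) * Complex.I / 2 := by
    rw [Complex.sin, ← Complex.exp_neg, neg_mul]
  -- push map and eval through
  simp only [Polynomial.map_sum, Polynomial.map_mul, Polynomial.map_sub, Polynomial.map_pow,
    Polynomial.map_add, Polynomial.map_neg, Polynomial.map_natCast, Polynomial.map_ofNat,
    Polynomial.map_one, Polynomial.map_C, Polynomial.map_X, Polynomial.Chebyshev.map_U,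
    eval_finset_sum, eval_mul, eval_sub, eval_pow, eval_C, eval_X, eval_one, eval_add,
    eval_neg, eval_natCast, eval_ofNat,
    map_mul, map_sub, map_pow, map_neg, map_one, map_natCast, map_ofNat]
  apply mul_right_cancel₀ hs
  rw [Finset.sum_mul]
  calc ∑ j ∈ Icc 1 N, (-1:ℂ)^j * (j:ℂ) * ((j:ℂ)-1) * ((2*N-1).choose (N-j) : ℂ) *
        eval (Complex.cos θ) (Polynomial.Chebyshev.U ℂ (2*(j:ℤ)-2)) * Complex.sin θ
      = ∑ j ∈ Icc 1 N, ((-1:ℂ)^j * (j:ℂ) * ((j:ℂ)-1) * ((2*N-1).choose (N-j) : ℂ)) *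
          (((u^2)^(N+j-1) - (u^2)^(N-j)) * (-Complex.I/(2*u^(2*N-1)))) := by
        refine Finset.sum_congr rfl fun j hj => ?_
        simp only [Finset.mem_Icc] at hj
        rw [mul_assoc _ _ (Complex.sin θ), Polynomial.Chebyshev.U_complex_cos]
        congr 1
        obtain ⟨a, rfl⟩ : ∃ a, j = a+1 := ⟨j-1, by omega⟩
        obtain ⟨b, hb⟩ : ∃ b, N = (a+1)+b := ⟨N-(a+1), by omega⟩
        subst hb
        rw [show (a+1+b)+(a+1)-1 = 2*a+b+1 from by omega,
          show (a+1+b)-(a+1) = b from by omega,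
          show 2*((a+1+b))-1 = 2*a+2*b+1 from by omega,
          show ((2*(((a:ℕ)+1:ℕ):ℤ) - 2 : ℤ) : ℂ) + 1 = ((2*a+1 : ℕ) : ℂ) by push_cast; ring]
        rw [Complex.sin,
          show -(((2*a+1:ℕ):ℂ)*θ)*Complex.I = -(((2*a+1:ℕ):ℂ)*(θ*Complex.I)) by ring,
          show (((2*a+1:ℕ):ℂ)*θ)*Complex.I = ((2*a+1:ℕ):ℂ)*(θ*Complex.I) by ring,
          Complex.exp_neg, Complex.exp_nat_mul, ← hu]
        field_simp
        ring
    _ = (∑ j ∈ Icc 1 N, ((-1:ℂ)^j * (j:ℂ) * ((j:ℂ)-1) * ((2*N-1).choose (N-j) : ℂ)) *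
          ((u^2)^(N+j-1) - (u^2)^(N-j))) * (-Complex.I/(2*u^(2*N-1))) := by
        rw [Finset.sum_mul]; refine Finset.sum_congr rfl fun j hj => by ring
    _ = (((-1:ℂ)^N * ((N:ℂ)-1)) * ((N:ℂ) * (u^2+1)^2 - 2*u^2) * (u^2-1)^(2*N-3)) *
          (-Complex.I/(2*u^(2*N-1))) := by rw [key (u^2)]
    _ = ((N:ℂ)-1) * 2^(2*N-3) * (2*(N:ℂ) * Complex.cos θ^2 - 1) *
          (1 - Complex.cos θ^2)^(N-2) * Complex.sin θ := by
        subst hp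
        rw [show 2*(p+2)-3 = 2*p+1 from by omega, show (p+2)-2 = p from by omega,
          show 2*(p+2)-1 = 2*p+3 from by omega]
        have h4 : 1 - Complex.cos θ^2 = -((u^2-1)/(2*u))^2 := by
          rw [hcos]; field_simp; ring
        rw [h4, hcos, hsin, neg_pow (((u^2-1)/(2*u))^2) p, ← pow_mul]
        rw [div_pow (u^2-1) (2*u) (2*p)]
        field_simp
        ring
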